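/- Let a Boolean query Q be given by a set 𝓜 of images (finite subsets of D), with a set S satisfying Q iff some M ∈ 𝓜 has ↑M ⊆ S. Then Q holds in the intersection of all repairs of D if and only if there exists an image M ∈ 𝓜 such that for every weakly consistent subset D' of D, the set D' ∪ M is weakly consistent with D. -/

import Mathlib

/-- Every consistent subset of `D` extends to a maximal consistent subset (repair). -/
lemma exists_repair_ext {F : Type*} [DecidableEq F]
    (D : Finset F) (C : Finset F → Prop) (D'' : Finset F)
    (h1 : D'' ⊆ D) (h2 : C D'') :
    ∃ R : Finset F, D'' ⊆ R ∧ R ⊆ D ∧ C R ∧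
      ∀ R' : Finset F, R ⊂ R' → R' ⊆ D → ¬ C R' := by
  classical
  set s : Set (Finset F) := {T | D'' ⊆ T ∧ T ⊆ D ∧ C T} with hs
  have hfin : s.Finite := Set.Finite.subset (D.powerset : Finset (Finset F)).finite_toSet
    (by intro T hT; simp [Finset.mem_powerset]; exact hT.2.1)
  have hne : s.Nonempty := ⟨D'', le_refl _, h1, h2⟩
  obtain ⟨R, hRs, hmax⟩ := hfin.exists_maximalFor (fun T => T.card) s hne
  refine ⟨R, hRs.1, hRs.2.1, hRs.2.2, ?_⟩
  intro R' hlt hR'D hCR'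
  have hR's : R' ∈ s := ⟨hRs.1.trans hlt.subset, hR'D, hCR'⟩
  have := hmax hR's (Finset.card_le_card hlt.subset)
  exact absurd (Finset.card_lt_card hlt) (not_lt.mpr this)

theorem intRep_query_iff {F : Type*} [DecidableEq F]
    (D : Finset F) (C : Finset F → Prop) (hC : C ∅)
    (Ms : Set (Finset F)) (hMs : ∀ M ∈ Ms, M ⊆ D) :
    (∃ M ∈ Ms, ∀ R : Finset F,
        (R ⊆ D ∧ C R ∧ ∀ R' : Finset F, R ⊂ R' → R' ⊆ D → ¬ C R') → M ⊆ R) ↔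
      (∃ M ∈ Ms, ∀ D' : Finset F, D' ⊆ D →
        (∃ D'' : Finset F, D' ⊆ D'' ∧ D'' ⊆ D ∧ C D'') →
        (∃ D'' : Finset F, D' ∪ M ⊆ D'' ∧ D'' ⊆ D ∧ C D'')) := by
  constructor
  · rintro ⟨M, hM, hrep⟩
    refine ⟨M, hM, ?_⟩
    rintro D' hD'D ⟨D'', hsub, hD''D, hCD''⟩
    obtain ⟨R, hR1, hR2, hR3, hR4⟩ := exists_repair_ext D C D'' hD''D hCD''
    refine ⟨R, ?_, hR2, hR3⟩
    exact Finset.union_subset (hsub.trans hR1) (hrep R ⟨hR2, hR3, hR4⟩)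
  · rintro ⟨M, hM, hwk⟩
    refine ⟨M, hM, ?_⟩
    rintro R ⟨hRD, hCR, hmax⟩
    obtain ⟨D'', hsub, hD''D, hCD''⟩ := hwk R hRD ⟨R, le_refl _, hRD, hCR⟩
    have hRD'' : R ⊆ D'' := (Finset.subset_union_left).trans hsub
    have hMD'' : M ⊆ D'' := (Finset.subset_union_right).trans hsub
    rcases eq_or_lt_of_le hRD'' with heq | hlt
    · exact heq ▸ hMD''
    · exact absurd hCD'' (hmax D'' hlt hD''D)
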